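/- Let G be a finite connected undirected graph with positive conductances and marked vertex b, and let e be an edge of G. Under the probability measure P on two-component spanning forests proportional to weight, the probability that e connects the floating component Σ to its complement (i.e., e has exactly one endpoint in Σ) equals κ(G)·T(e,e)/(c(e)·κ₂(G)), where T is the transfer current. Equivalently, the weighted sum of 2SFs for which e joins the two components equals κ(G)·T(e,e)/c(e), which is the weighted sum of spanning trees containing e. -/

import Mathlib

open scoped Classical BigOperators

noncomputable section

namespace TwoSF

variable {V : Type*} [Fintype V] [DecidableEq V]

/-- `u` and `v` are linked by the edges in `B`. -/
def Linked (B : Finset (Sym2 V)) : V → V → Prop :=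
  Relation.ReflTransGen fun a b => s(a, b) ∈ B

/-- The number of connected components of the spanning subgraph `(V, B)`. -/
def ncomp (B : Finset (Sym2 V)) : ℕ :=
  Nat.card (Quot (Linked B))

/-- `B` is a spanning forest of the complete graph on `V` with exactly `k`
connected components: it has `k` components and, by the rank count
`|B| + k = |V|`, it is acyclic (in particular it contains no loop edge).
Taking `k = 1` gives spanning trees, `k = 2` gives two-component spanning
forests (2SF). -/
def IsSF (k : ℕ) (B : Finset (Sym2 V)) : Prop :=
  ncomp B = k ∧ B.card + k = Fintype.card V

/-- The weight of an edge set: the product of its conductances. -/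
def wt (c : Sym2 V → ℝ) (B : Finset (Sym2 V)) : ℝ := ∏ e ∈ B, c e

/-- κ: the weighted sum of spanning trees.  Edge sets containing a non-edge
(an `e` with `c e = 0`) contribute weight `0`, so this is the weighted number
of spanning trees of the graph whose edges are the support of `c`. -/
def kappa1 (c : Sym2 V → ℝ) : ℝ := ∑ B ∈ Finset.univ.filter (IsSF 1), wt c B

/-- κ₂: the weighted sum of two-component spanning forests. -/
def kappa2 (c : Sym2 V → ℝ) : ℝ := ∑ B ∈ Finset.univ.filter (IsSF 2), wt c B

/-- The floating component of `B`: the set of vertices not linked to `b`. -/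
def floating (b : V) (B : Finset (Sym2 V)) : Finset V :=
  Finset.univ.filter fun v => ¬ Linked B b v

/-- The graph Laplacian `Δ` of the graph with conductances `c`. -/
def lap (c : Sym2 V → ℝ) : Matrix V V ℝ := fun u v =>
  if u = v then ∑ w ∈ Finset.univ.filter (· ≠ u), c s(u, w) else -c s(u, v)

/-- The Dirichlet Laplacian `Δ_D`, indexed by `V \ {b}`. -/
def dlap (c : Sym2 V → ℝ) (b : V) : Matrix {w : V // w ≠ b} {w : V // w ≠ b} ℝ :=
  Matrix.of fun p q => lap c p.1 q.1

/-- The Green function with Dirichlet boundary condition at `b` (the inverse of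
the Dirichlet Laplacian), with the convention that it vanishes as soon as one
of its arguments is `b`. -/
def green (c : Sym2 V → ℝ) (b : V) (u v : V) : ℝ :=
  if hu : u = b then 0 else if hv : v = b then 0 else (dlap c b)⁻¹ ⟨u, hu⟩ ⟨v, hv⟩

/-- The probability of the event `p` under the probability measure on
two-component spanning forests assigning to each 2SF a probability
proportional to its weight. -/
def pr2 (c : Sym2 V → ℝ) (p : Finset (Sym2 V) → Prop) : ℝ :=
  (∑ B ∈ Finset.univ.filter (fun B => IsSF 2 B ∧ p B), wt c B) / kappa2 c

/-- The expectation of `((floating b B).card : ℝ) ^ k`, i.e. of `|Σ|^k`, under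
the probability measure on two-component spanning forests proportional to
weight. -/
def expPow (c : Sym2 V → ℝ) (b : V) (k : ℕ) : ℝ :=
  (∑ B ∈ Finset.univ.filter (IsSF 2), wt c B * ((floating b B).card : ℝ) ^ k) / kappa2 c

/-- `|∂Σ|`: the sum of the conductances of the edges having exactly one
endpoint in the floating component of `B`. -/
def bdryWt (c : Sym2 V → ℝ) (b : V) (B : Finset (Sym2 V)) : ℝ :=
  ∑ u ∈ floating b B, ∑ v ∈ (floating b B)ᶜ, c s(u, v)

/-- The expectation of `|∂Σ|` under the probability measure on two-component
spanning forests proportional to weight. -/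
def expBdry (c : Sym2 V → ℝ) (b : V) : ℝ :=
  (∑ B ∈ Finset.univ.filter (IsSF 2), wt c B * bdryWt c b B) / kappa2 c

end TwoSF

namespace TwoSF

variable {V : Type*} [Fintype V] [DecidableEq V]

set_option linter.unusedSectionVars false

lemma linked_refl (B : Finset (Sym2 V)) (v : V) : Linked B v v := Relation.ReflTransGen.refl

lemma linked_of_mem {B : Finset (Sym2 V)} {u v : V} (h : s(u,v) ∈ B) : Linked B u v :=
  Relation.ReflTransGen.single h

lemma linked_symm {B : Finset (Sym2 V)} {a c : V} (h : Linked B a c) : Linked B c a := by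
  induction h with
  | refl => exact Relation.ReflTransGen.refl
  | tail _ hst ih =>
      exact Relation.ReflTransGen.head (show s(_, _) ∈ B from Sym2.eq_swap ▸ hst) ih

lemma linked_trans {B : Finset (Sym2 V)} {a c d : V} (h : Linked B a c) (h' : Linked B c d) :
    Linked B a d := Relation.ReflTransGen.trans h h'

lemma linked_mono {B B' : Finset (Sym2 V)} (hBB : B ⊆ B') {a c : V} (h : Linked B a c) :
    Linked B' a c := Relation.ReflTransGen.mono (fun _ _ hh => hBB hh) a c h

/-- The connected component of `v` as a `Finset`. -/
def comp (B : Finset (Sym2 V)) (v : V) : Finset V := Finset.univ.filter (Linked B v)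

lemma mem_comp {B : Finset (Sym2 V)} {v u : V} : u ∈ comp B v ↔ Linked B v u := by
  simp [comp]

lemma comp_eq_iff {B : Finset (Sym2 V)} {a c : V} : comp B a = comp B c ↔ Linked B a c := by
  constructor
  · intro h
    have : c ∈ comp B a := h ▸ mem_comp.2 (linked_refl B c)
    exact mem_comp.1 this
  · intro h
    ext u
    simp only [mem_comp]
    exact ⟨fun h' => linked_trans (linked_symm h) h', fun h' => linked_trans h h'⟩

lemma ncomp_eq (B : Finset (Sym2 V)) : ncomp B = (Finset.univ.image (comp B)).card := by
  have hbij : Function.Bijective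
      (Quot.lift (fun v => (⟨comp B v, Finset.mem_image_of_mem _ (Finset.mem_univ v)⟩ :
          {s // s ∈ Finset.univ.image (comp B)}))
        (fun a c h => Subtype.ext (comp_eq_iff.2 h)) : Quot (Linked B) → _) := by
    constructor
    · intro q q'
      refine Quot.induction_on₂ q q' ?_
      intro a c h
      exact Quot.sound (comp_eq_iff.1 (congrArg Subtype.val h))
    · rintro ⟨s, hs⟩
      obtain ⟨v, _, rfl⟩ := Finset.mem_image.1 hs
      exact ⟨Quot.mk _ v, rfl⟩
  rw [ncomp, Nat.card_congr (Equiv.ofBijective _ hbij), Nat.card_eq_finsetCard]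

lemma ncomp_eq_one_of {B : Finset (Sym2 V)} {u : V} (h : ∀ v, Linked B u v) : ncomp B = 1 := by
  rw [ncomp_eq]
  rw [Finset.card_eq_one]
  refine ⟨comp B u, ?_⟩
  ext s
  simp only [Finset.mem_image, Finset.mem_singleton]
  constructor
  · rintro ⟨a, _, rfl⟩
    exact (comp_eq_iff.2 (linked_symm (h a)))
  · rintro rfl
    exact ⟨u, Finset.mem_univ u, rfl⟩

lemma linked_of_ncomp_eq_one {B : Finset (Sym2 V)} (h : ncomp B = 1) (u v : V) :
    Linked B u v := by
  rw [ncomp_eq] at h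
  have h1 : (Finset.univ.image (comp B)).card ≤ 1 := h.le
  have := Finset.card_le_one.1 h1 (comp B u)
    (Finset.mem_image_of_mem _ (Finset.mem_univ u)) (comp B v)
    (Finset.mem_image_of_mem _ (Finset.mem_univ v))
  exact comp_eq_iff.1 this

end TwoSF
namespace TwoSF

variable {V : Type*} [Fintype V] [DecidableEq V]

set_option linter.unusedSectionVars false

lemma linked_insert_iff {B : Finset (Sym2 V)} {u v a c : V} :
    Linked (insert s(u,v) B) a c ↔
      Linked B a c ∨ (Linked B a u ∧ Linked B v c) ∨ (Linked B a v ∧ Linked B u c) := by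
  constructor
  · intro h
    induction h with
    | refl => exact Or.inl (linked_refl B a)
    | @tail b' c' hac hst ih =>
      rcases Finset.mem_insert.1 hst with he | hB
      · rcases Sym2.eq_iff.1 he with ⟨rfl, rfl⟩ | ⟨rfl, rfl⟩
        · rcases ih with h | ⟨h1, h2⟩ | ⟨h1, h2⟩
          · exact Or.inr (Or.inl ⟨h, linked_refl B _⟩)
          · exact Or.inr (Or.inl ⟨h1, linked_refl B _⟩)
          · exact Or.inl h1
        · rcases ih with h | ⟨h1, h2⟩ | ⟨h1, h2⟩
          · exact Or.inr (Or.inr ⟨h, linked_refl B _⟩)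
          · exact Or.inl h1
          · exact Or.inr (Or.inr ⟨h1, linked_refl B _⟩)
      · rcases ih with h | ⟨h1, h2⟩ | ⟨h1, h2⟩
        · exact Or.inl (h.tail hB)
        · exact Or.inr (Or.inl ⟨h1, h2.tail hB⟩)
        · exact Or.inr (Or.inr ⟨h1, h2.tail hB⟩)
  · intro h
    have mono : ∀ {p q : V}, Linked B p q → Linked (insert s(u,v) B) p q :=
      fun h => linked_mono (Finset.subset_insert _ _) h
    have huv : Linked (insert s(u,v) B) u v :=
      linked_of_mem (Finset.mem_insert_self _ _)
    rcases h with h | ⟨h1, h2⟩ | ⟨h1, h2⟩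
    · exact mono h
    · exact (mono h1).trans (huv.trans (mono h2))
    · exact (mono h1).trans ((linked_symm huv).trans (mono h2))

lemma comp_insert_of_not_linked {B : Finset (Sym2 V)} {u v : V} (h : ¬ Linked B u v) (a : V) :
    comp (insert s(u,v) B) a =
      if Linked B a u ∨ Linked B a v then comp B u ∪ comp B v else comp B a := by
  split_ifs with ha
  · ext w
    simp only [mem_comp, Finset.mem_union, linked_insert_iff]
    constructor
    · rintro (hw | ⟨h1, h2⟩ | ⟨h1, h2⟩)
      · rcases ha with ha | ha
        · exact Or.inl ((linked_symm ha).trans hw)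
        · exact Or.inr ((linked_symm ha).trans hw)
      · exact Or.inr h2
      · exact Or.inl h2
    · rintro (hw | hw)
      · rcases ha with ha | ha
        · exact Or.inl (ha.trans hw)
        · exact Or.inr (Or.inr ⟨ha, hw⟩)
      · rcases ha with ha | ha
        · exact Or.inr (Or.inl ⟨ha, hw⟩)
        · exact Or.inl (ha.trans hw)
  · push_neg at ha
    ext w
    simp only [mem_comp, linked_insert_iff]
    constructor
    · rintro (hw | ⟨h1, h2⟩ | ⟨h1, h2⟩)
      · exact hw
      · exact absurd h1 ha.1
      · exact absurd h1 ha.2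
    · exact fun hw => Or.inl hw

lemma ncomp_insert_of_not_linked {B : Finset (Sym2 V)} {u v : V} (h : ¬ Linked B u v) :
    ncomp B = ncomp (insert s(u,v) B) + 1 := by
  classical
  set img := Finset.univ.image (comp B) with himg
  have hcu : comp B u ∈ img := Finset.mem_image_of_mem _ (Finset.mem_univ u)
  have hcv : comp B v ∈ img := Finset.mem_image_of_mem _ (Finset.mem_univ v)
  have hne : comp B u ≠ comp B v := fun hh => h (comp_eq_iff.1 hh)
  have key : Finset.univ.image (comp (insert s(u,v) B)) =
      insert (comp B u ∪ comp B v) ((img.erase (comp B u)).erase (comp B v)) := by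
    ext s
    simp only [Finset.mem_image, Finset.mem_insert, Finset.mem_erase, himg]
    constructor
    · rintro ⟨a, -, rfl⟩
      rw [comp_insert_of_not_linked h a]
      split_ifs with ha
      · exact Or.inl rfl
      · push_neg at ha
        refine Or.inr ⟨?_, ?_, ⟨a, Finset.mem_univ a, rfl⟩⟩
        · exact fun hh => ha.2 (comp_eq_iff.1 hh)
        · exact fun hh => ha.1 (comp_eq_iff.1 hh)
    · rintro (rfl | ⟨hnv, hnu, a, -, rfl⟩)
      · exact ⟨u, Finset.mem_univ u,
          by rw [comp_insert_of_not_linked h u, if_pos (Or.inl (linked_refl B u))]⟩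
      · refine ⟨a, Finset.mem_univ a, ?_⟩
        rw [comp_insert_of_not_linked h a, if_neg ?_]
        rintro (ha | ha)
        · exact hnu (comp_eq_iff.2 (linked_symm ha) ▸ rfl)
        · exact hnv (comp_eq_iff.2 (linked_symm ha) ▸ rfl)
  have hnotmem : comp B u ∪ comp B v ∉ (img.erase (comp B u)).erase (comp B v) := by
    intro hmem
    have h1 := Finset.mem_erase.1 hmem
    have h2 := Finset.mem_erase.1 h1.2
    obtain ⟨a, -, ha⟩ := Finset.mem_image.1 h2.2
    have haa : a ∈ comp B a := mem_comp.2 (linked_refl B a)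
    rw [ha] at haa
    rcases Finset.mem_union.1 haa with hau | hav
    · exact h2.1 (by rw [← ha, comp_eq_iff.2 (linked_symm (mem_comp.1 hau))])
    · exact h1.1 (by rw [← ha, comp_eq_iff.2 (linked_symm (mem_comp.1 hav))])
  have hcv' : comp B v ∈ img.erase (comp B u) := Finset.mem_erase.2 ⟨fun hh => hne hh.symm, hcv⟩
  have h2le : 2 ≤ img.card := Finset.one_lt_card.2 ⟨_, hcu, _, hcv, hne⟩
  rw [ncomp_eq, ncomp_eq, ← himg, key, Finset.card_insert_of_notMem hnotmem,
    Finset.card_erase_of_mem hcv', Finset.card_erase_of_mem hcu]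
  omega

lemma ncomp_insert_of_linked {B : Finset (Sym2 V)} {u v : V} (h : Linked B u v) :
    ncomp (insert s(u,v) B) = ncomp B := by
  rw [ncomp_eq, ncomp_eq]
  congr 1
  apply Finset.image_congr
  intro a _
  ext w
  simp only [mem_comp, linked_insert_iff]
  constructor
  · rintro (hw | ⟨h1, h2⟩ | ⟨h1, h2⟩)
    · exact hw
    · exact h1.trans (h.trans h2)
    · exact h1.trans ((linked_symm h).trans h2)
  · exact fun hw => Or.inl hw

lemma linked_empty_iff {a c : V} : Linked (∅ : Finset (Sym2 V)) a c ↔ a = c := by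
  constructor
  · intro h
    induction h with
    | refl => rfl
    | tail _ hst _ => exact absurd hst (Finset.notMem_empty _)
  · rintro rfl; exact linked_refl _ a

lemma ncomp_empty : ncomp (∅ : Finset (Sym2 V)) = Fintype.card V := by
  rw [ncomp_eq]
  have : comp (∅ : Finset (Sym2 V)) = fun v => {v} := by
    funext v; ext w; simp [mem_comp, linked_empty_iff, eq_comm]
  rw [this, Finset.card_image_of_injective _ (fun a c h => Finset.singleton_injective h)]
  simp

lemma card_le_card_add_ncomp (B : Finset (Sym2 V)) :
    Fintype.card V ≤ B.card + ncomp B := by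
  classical
  induction B using Finset.induction_on with
  | empty => rw [ncomp_empty]; simp
  | @insert e B henB ih =>
    induction e using Sym2.ind with
    | _ u v =>
      rw [Finset.card_insert_of_notMem henB]
      by_cases h : Linked B u v
      · rw [ncomp_insert_of_linked h]; omega
      · have := ncomp_insert_of_not_linked h
        omega

lemma linked_of_ncomp_two {B : Finset (Sym2 V)} (h : ncomp B = 2) {a c d : V}
    (hac : ¬ Linked B a c) (had : ¬ Linked B a d) : Linked B c d := by
  by_contra hcd
  have hsub : {comp B a, comp B c, comp B d} ⊆ Finset.univ.image (comp B) := by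
    intro s hs
    simp only [Finset.mem_insert, Finset.mem_singleton] at hs
    rcases hs with rfl | rfl | rfl <;> exact Finset.mem_image_of_mem _ (Finset.mem_univ _)
  have hcard : ({comp B a, comp B c, comp B d} : Finset (Finset V)).card = 3 := by
    rw [Finset.card_insert_of_notMem, Finset.card_insert_of_notMem, Finset.card_singleton]
    · simp only [Finset.mem_singleton]
      exact fun hh => hcd (comp_eq_iff.1 hh)
    · simp only [Finset.mem_insert, Finset.mem_singleton]
      rintro (hh | hh)
      · exact hac (comp_eq_iff.1 hh)
      · exact had (comp_eq_iff.1 hh)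
  have := Finset.card_le_card hsub
  rw [hcard, ← ncomp_eq] at this
  omega

end TwoSF
namespace TwoSF

variable {V : Type*} [Fintype V] [DecidableEq V]

set_option linter.unusedSectionVars false
set_option linter.unusedVariables false

lemma mem_floating {b v : V} {B : Finset (Sym2 V)} :
    v ∈ floating b B ↔ ¬ Linked B b v := by simp [floating]

/-- Forward direction of the tree/2SF bijection. -/
lemma isSF_one_insert {b x y : V} {B : Finset (Sym2 V)} (h2 : IsSF 2 B)
    (hxor : Xor' (x ∈ floating b B) (y ∈ floating b B)) :
    IsSF 1 (insert s(x,y) B) ∧ ¬ s(x,y) ∈ B ∧ ¬ Linked B x y := by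
  simp only [mem_floating] at hxor
  have hnl : ¬ Linked B x y := by
    rcases hxor with ⟨hx, hy⟩ | ⟨hy, hx⟩
    · push_neg at hy
      exact fun hl => hx (hy.trans (linked_symm hl))
    · push_neg at hx
      exact fun hl => hy (hx.trans hl)
  have hnmem : ¬ s(x,y) ∈ B := fun hm => hnl (linked_of_mem hm)
  have hdec := ncomp_insert_of_not_linked hnl
  obtain ⟨hn2, hc2⟩ := h2
  refine ⟨⟨by omega, ?_⟩, hnmem, hnl⟩
  rw [Finset.card_insert_of_notMem hnmem]
  omega

/-- Backward direction of the tree/2SF bijection. -/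
lemma isSF_two_erase {b x y : V} {A : Finset (Sym2 V)} (h1 : IsSF 1 A) (hmem : s(x,y) ∈ A) :
    IsSF 2 (A.erase s(x,y)) ∧
      Xor' (x ∈ floating b (A.erase s(x,y))) (y ∈ floating b (A.erase s(x,y))) := by
  obtain ⟨hn1, hc1⟩ := h1
  set B := A.erase s(x,y) with hB
  have hins : insert s(x,y) B = A := Finset.insert_erase hmem
  have hcB : B.card + 1 = A.card := by
    rw [hB, Finset.card_erase_of_mem hmem]
    have : 0 < A.card := Finset.card_pos.2 ⟨_, hmem⟩
    omega
  have hnl : ¬ Linked B x y := by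
    intro hl
    have : ncomp A = ncomp B := by rw [← hins]; exact ncomp_insert_of_linked hl
    have hle := card_le_card_add_ncomp B
    rw [← this, hn1] at hle
    omega
  have hdec : ncomp B = ncomp A + 1 := by
    rw [← hins]; exact ncomp_insert_of_not_linked hnl
  have h2 : IsSF 2 B := ⟨by omega, by omega⟩
  refine ⟨h2, ?_⟩
  simp only [mem_floating]
  have hnboth : ¬ (¬ Linked B b x ∧ ¬ Linked B b y) := by
    rintro ⟨hx, hy⟩
    exact hnl (linked_of_ncomp_two h2.1 hx hy)
  by_cases hx : Linked B b x
  · have hy : ¬ Linked B b y := fun hy => hnl ((linked_symm hx).trans hy)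
    exact Or.inr ⟨hy, fun h => h hx⟩
  · have hy : Linked B b y := by
      by_contra hy
      exact hnboth ⟨hx, hy⟩
    exact Or.inl ⟨hx, fun h => h hy⟩

lemma exists_spanning_tree (b : V) {S : Finset (Sym2 V)} (hconn : ncomp S = 1) :
    ∃ T, T ⊆ S ∧ IsSF 1 T := by
  have grow : ∀ (j : ℕ) (T : Finset (Sym2 V)), T ⊆ S →
      T.card + ncomp T = Fintype.card V → ncomp T = j + 1 → ∃ T', T' ⊆ S ∧ IsSF 1 T' := by
    intro j
    induction j with
    | zero => exact fun T hTS hcard hnc => ⟨T, hTS, hnc, by omega⟩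
    | succ j ih =>
      intro T hTS hcard hnc
      have hex : ∃ p q, s(p,q) ∈ S ∧ ¬ Linked T p q := by
        by_contra hno
        push_neg at hno
        have hmono : ∀ {a c : V}, Linked S a c → Linked T a c := by
          intro a c h
          induction h with
          | refl => exact linked_refl T a
          | tail _ hst ih => exact ih.trans (hno _ _ hst)
        have : ∀ v, Linked T b v := fun v => hmono (linked_of_ncomp_eq_one hconn b v)
        have := ncomp_eq_one_of this
        omega
      obtain ⟨p, q, hpqS, hpq⟩ := hex
      have hnm : s(p,q) ∉ T := fun hm => hpq (linked_of_mem hm)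
      have hdec := ncomp_insert_of_not_linked hpq
      refine ih (insert s(p,q) T) (Finset.insert_subset hpqS hTS) ?_ (by omega)
      rw [Finset.card_insert_of_notMem hnm]
      omega
  have hne : Nonempty V := ⟨b⟩
  have hcard : 1 ≤ Fintype.card V := Fintype.card_pos_iff.2 hne
  refine grow (Fintype.card V - 1) ∅ (Finset.empty_subset S) ?_ ?_
  · rw [ncomp_empty]; simp
  · rw [ncomp_empty]; omega

end TwoSF
namespace TwoSF

variable {V : Type*} [Fintype V] [DecidableEq V]

set_option linter.unusedSectionVars false
set_option linter.unusedVariables false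

/-- A signed incidence function: for a non-loop edge `e` and `v ∈ e`, the sign is `±1`
depending on the order of the endpoints under a fixed enumeration of `V`; otherwise `0`. -/
def sgn (v : V) (e : Sym2 V) : ℝ :=
  if h : v ∈ e ∧ ¬ e.IsDiag then
    (if (Fintype.equivFin V) v < (Fintype.equivFin V) (Sym2.Mem.other' h.1) then 1 else -1)
  else 0

lemma sgn_eq_zero_of_not_mem {v : V} {e : Sym2 V} (h : v ∉ e) : sgn v e = 0 := by
  rw [sgn, dif_neg]
  tauto

lemma sgn_eq_zero_of_isDiag {v : V} {e : Sym2 V} (h : e.IsDiag) : sgn v e = 0 := by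
  rw [sgn, dif_neg]
  tauto

lemma sgn_mk {x y : V} (hxy : x ≠ y) :
    (sgn x s(x,y) = 1 ∧ sgn y s(x,y) = -1) ∨ (sgn x s(x,y) = -1 ∧ sgn y s(x,y) = 1) := by
  have hx : x ∈ s(x,y) := by rw [Sym2.mem_iff]; exact Or.inl rfl
  have hy : y ∈ s(x,y) := by rw [Sym2.mem_iff]; exact Or.inr rfl
  have hd : ¬ (s(x,y) : Sym2 V).IsDiag := by rw [Sym2.mk_isDiag_iff]; exact hxy
  have hox : Sym2.Mem.other' hx = y := by
    have := Sym2.other_spec' hx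
    rcases Sym2.eq_iff.1 this with ⟨-, h⟩ | ⟨h1, h2⟩
    · exact h
    · exact absurd h1 hxy
  have hoy : Sym2.Mem.other' hy = x := by
    have := Sym2.other_spec' hy
    rcases Sym2.eq_iff.1 this with ⟨h1, -⟩ | ⟨-, h⟩
    · exact absurd h1.symm hxy
    · exact h
  have hfne : (Fintype.equivFin V) x ≠ (Fintype.equivFin V) y :=
    fun hh => hxy ((Fintype.equivFin V).injective hh)
  rw [sgn, dif_pos ⟨hx, hd⟩, sgn, dif_pos ⟨hy, hd⟩]
  simp only [hox, hoy]
  rcases lt_or_gt_of_ne hfne with hlt | hgt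
  · left
    rw [if_pos hlt, if_neg (not_lt.2 hlt.le)]
    exact ⟨rfl, rfl⟩
  · right
    rw [if_neg (not_lt.2 hgt.le), if_pos hgt]
    exact ⟨rfl, rfl⟩

lemma sgn_mul_self {v : V} {e : Sym2 V} (hv : v ∈ e) (hd : ¬ e.IsDiag) :
    sgn v e * sgn v e = 1 := by
  rw [sgn, dif_pos ⟨hv, hd⟩]
  split_ifs <;> norm_num

lemma sgn_mul_self_ite (v : V) (e : Sym2 V) :
    sgn v e * sgn v e = if v ∈ e ∧ ¬ e.IsDiag then 1 else 0 := by
  split_ifs with h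
  · exact sgn_mul_self h.1 h.2
  · rw [not_and_or] at h
    rcases h with h | h
    · rw [sgn_eq_zero_of_not_mem h, mul_zero]
    · rw [sgn_eq_zero_of_isDiag (not_not.1 h), mul_zero]

lemma sgn_add_sgn {x y : V} (hxy : x ≠ y) : sgn x s(x,y) + sgn y s(x,y) = 0 := by
  rcases sgn_mk hxy with ⟨h1, h2⟩ | ⟨h1, h2⟩ <;> rw [h1, h2] <;> ring

lemma sgn_mul_sgn {x y : V} (hxy : x ≠ y) : sgn x s(x,y) * sgn y s(x,y) = -1 := by
  rcases sgn_mk hxy with ⟨h1, h2⟩ | ⟨h1, h2⟩ <;> rw [h1, h2] <;> ring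

end TwoSF
namespace TwoSF

variable {V : Type*} [Fintype V] [DecidableEq V]

set_option linter.unusedSectionVars false
set_option linter.unusedVariables false

lemma eq_mk_of_mem_of_mem {e : Sym2 V} {u v : V} (hu : u ∈ e) (hv : v ∈ e) (huv : u ≠ v) :
    e = s(u, v) := by
  obtain ⟨w, rfl⟩ : ∃ w, e = s(u, w) := ⟨Sym2.Mem.other' hu, (Sym2.other_spec' hu).symm⟩
  rcases Sym2.mem_iff.1 hv with rfl | rfl
  · exact absurd rfl huv
  · rfl

lemma lap_eq_sum (c : Sym2 V → ℝ) (u v : V) :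
    lap c u v = ∑ e : Sym2 V, c e * (sgn u e * sgn v e) := by
  rcases eq_or_ne u v with rfl | huv
  · rw [lap, if_pos rfl]
    have hterm : ∀ e : Sym2 V,
        c e * (sgn u e * sgn u e) = if u ∈ e ∧ ¬ e.IsDiag then c e else 0 := by
      intro e; rw [sgn_mul_self_ite]; split_ifs <;> ring
    rw [Finset.sum_congr rfl (fun e _ => hterm e), ← Finset.sum_filter]
    refine Finset.sum_bij (fun w _ => s(u, w)) ?_ ?_ ?_ ?_
    · intro w hw
      simp only [Finset.mem_filter, Finset.mem_univ, true_and] at hw ⊢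
      exact ⟨Sym2.mem_iff.2 (Or.inl rfl), fun hd => hw (Sym2.mk_isDiag_iff.1 hd).symm⟩
    · intro w hw w' hw' hww'
      exact Sym2.congr_right.1 hww'
    · intro e he
      simp only [Finset.mem_filter, Finset.mem_univ, true_and] at he
      obtain ⟨hue, hd⟩ := he
      refine ⟨Sym2.Mem.other' hue, ?_, Sym2.other_spec' hue⟩
      simp only [Finset.mem_filter, Finset.mem_univ, true_and]
      intro hh
      exact hd (by rw [← Sym2.other_spec' hue, hh, Sym2.mk_isDiag_iff])
    · intro w hw; rfl
  · rw [lap, if_neg huv]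
    rw [Finset.sum_eq_single s(u,v)]
    · rw [sgn_mul_sgn huv]; ring
    · intro e _ hne
      rcases Classical.em (u ∈ e) with hu | hu
      · rcases Classical.em (v ∈ e) with hv | hv
        · exact absurd (eq_mk_of_mem_of_mem hu hv huv) hne
        · rw [sgn_eq_zero_of_not_mem hv]; ring
      · rw [sgn_eq_zero_of_not_mem hu]; ring
    · intro h; exact absurd (Finset.mem_univ _) h

lemma lap_symm (c : Sym2 V → ℝ) (u v : V) : lap c u v = lap c v u := by
  rcases eq_or_ne u v with rfl | h
  · rfl
  · rw [lap, lap, if_neg h, if_neg (Ne.symm h), Sym2.eq_swap]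

section CB

variable {ι : Type*} [Fintype ι] [DecidableEq ι] {E : Type*} [Fintype E] [DecidableEq E]

lemma sum_perm_det (f : ι → E → ℝ) (e₀ : ι ≃ E) :
    ∑ σ : ι ≃ E, (∏ p, f p (σ p)) * Matrix.det (Matrix.of fun p q : ι => f q (σ p)) =
      (Matrix.det (Matrix.of fun p q : ι => f p (e₀ q)))^2 := by
  classical
  set A : Matrix ι ι ℝ := Matrix.of fun p q : ι => f p (e₀ q) with hA
  rw [← Equiv.sum_comp (Equiv.equivCongr (Equiv.refl ι) e₀)]
  have happ : ∀ (π : Equiv.Perm ι) (p : ι),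
      ((Equiv.equivCongr (Equiv.refl ι) e₀) π) p = e₀ (π p) := by
    intro π p; simp [Equiv.equivCongr]
  have key : ∀ π : Equiv.Perm ι,
      Matrix.det (Matrix.of fun p q : ι => f q (((Equiv.equivCongr (Equiv.refl ι) e₀) π) p)) =
        (Equiv.Perm.sign π : ℝ) * Matrix.det A := by
    intro π
    have h1 : (Matrix.of fun p q : ι => f q (((Equiv.equivCongr (Equiv.refl ι) e₀) π) p)) =
        (Matrix.transpose A).submatrix π id := by
      ext p q
      simp [happ, hA, Matrix.transpose, Matrix.submatrix]
    rw [h1, Matrix.det_permute, Matrix.det_transpose]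
  calc ∑ π : Equiv.Perm ι,
        (∏ p, f p (((Equiv.equivCongr (Equiv.refl ι) e₀) π) p)) *
          Matrix.det (Matrix.of fun p q : ι => f q (((Equiv.equivCongr (Equiv.refl ι) e₀) π) p))
      = Matrix.det A * ∑ π : Equiv.Perm ι,
          (Equiv.Perm.sign π : ℝ) * ∏ p, (Matrix.transpose A) (π p) p := by
        rw [Finset.mul_sum]
        refine Finset.sum_congr rfl fun π _ => ?_
        rw [key π]
        have : (∏ p, f p (((Equiv.equivCongr (Equiv.refl ι) e₀) π) p)) =
            ∏ p, (Matrix.transpose A) (π p) p := by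
          refine Finset.prod_congr rfl fun p _ => ?_
          simp [happ, hA, Matrix.transpose]
        rw [this]; ring
    _ = Matrix.det A * Matrix.det (Matrix.transpose A) := by
        congr 1
        rw [Matrix.det_apply']
    _ = (Matrix.det A)^2 := by rw [Matrix.det_transpose]; ring

lemma det_sum_mul (w : E → ℝ) (f : ι → E → ℝ) (F : Finset E → ℝ)
    (hF : ∀ S : Finset E, S.card = Fintype.card ι → ∀ e₀ : ι ≃ {e // e ∈ S},
      (∏ e ∈ S, w e) * (Matrix.det (Matrix.of fun p q : ι => f p (e₀ q).1))^2 = F S) :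
    Matrix.det (Matrix.of fun p q : ι => ∑ e : E, w e * (f p e * f q e)) =
      ∑ S ∈ Finset.univ.powersetCard (Fintype.card ι), F S := by
  classical
  -- Step 1: multilinear expansion over rows
  have hdet : Matrix.det (Matrix.of fun p q : ι => ∑ e : E, w e * (f p e * f q e)) =
      ∑ r : ι → E, (∏ p, w (r p) * f p (r p)) *
        Matrix.det (Matrix.of fun p q : ι => f q (r p)) := by
    have h1 : (Matrix.of fun p q : ι => ∑ e : E, w e * (f p e * f q e)) =
        fun p => ∑ e : E, (w e * f p e) • (fun q : ι => f q e) := by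
      funext p q
      simp only [Matrix.of_apply, Finset.sum_apply, Pi.smul_apply, smul_eq_mul]
      refine Finset.sum_congr rfl fun e _ => by ring
    show (Matrix.detRowAlternating : (ι → ℝ) [⋀^ι]→ₗ[ℝ] ℝ) _ = _
    rw [h1]
    have hms := (Matrix.detRowAlternating : (ι → ℝ) [⋀^ι]→ₗ[ℝ] ℝ).toMultilinearMap.map_sum
      (g := fun (p : ι) (e : E) => (w e * f p e) • (fun q : ι => f q e))
    simp only [AlternatingMap.coe_multilinearMap] at hms
    rw [hms]
    refine Finset.sum_congr rfl fun r _ => ?_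
    have := (Matrix.detRowAlternating : (ι → ℝ) [⋀^ι]→ₗ[ℝ] ℝ).toMultilinearMap.map_smul_univ
      (fun p => w (r p) * f p (r p)) (fun p => (fun q : ι => f q (r p)))
    simp only [AlternatingMap.coe_multilinearMap] at this ⊢
    rw [this, smul_eq_mul]
    rfl
  rw [hdet]
  -- Step 2: non-injective terms vanish
  rw [← Finset.sum_filter_add_sum_filter_not Finset.univ (fun r : ι → E => Function.Injective r)]
  have hzero : ∑ r ∈ Finset.univ.filter (fun r : ι → E => ¬ Function.Injective r),
      (∏ p, w (r p) * f p (r p)) * Matrix.det (Matrix.of fun p q : ι => f q (r p)) = 0 := by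
    refine Finset.sum_eq_zero fun r hr => ?_
    simp only [Finset.mem_filter, Finset.mem_univ, true_and] at hr
    rw [Function.not_injective_iff] at hr
    obtain ⟨p1, p2, heq, hne⟩ := hr
    have : Matrix.det (Matrix.of fun p q : ι => f q (r p)) = 0 := by
      apply Matrix.det_zero_of_row_eq hne
      funext q
      simp [heq]
    rw [this, mul_zero]
  rw [hzero, add_zero]
  -- Step 3: group by image
  have hmaps : ∀ r ∈ Finset.univ.filter (fun r : ι → E => Function.Injective r),
      Finset.univ.image r ∈ Finset.univ.powersetCard (Fintype.card ι) := by
    intro r hr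
    simp only [Finset.mem_filter, Finset.mem_univ, true_and] at hr
    rw [Finset.mem_powersetCard]
    exact ⟨Finset.subset_univ _, by rw [Finset.card_image_of_injective _ hr, Finset.card_univ]⟩
  rw [← Finset.sum_fiberwise_of_maps_to hmaps]
  refine Finset.sum_congr rfl fun S hS => ?_
  have hScard : S.card = Fintype.card ι := (Finset.mem_powersetCard.1 hS).2
  have hcardS : Fintype.card {e // e ∈ S} = Fintype.card ι := by
    rw [Fintype.card_coe, hScard]
  -- the fiber over S is in bijection with equivalences ι ≃ S
  have hfiber : ∑ r ∈ (Finset.univ.filter (fun r : ι → E => Function.Injective r)).filter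
      (fun r => Finset.univ.image r = S),
      (∏ p, w (r p) * f p (r p)) * Matrix.det (Matrix.of fun p q : ι => f q (r p)) =
      ∑ σ : ι ≃ {e // e ∈ S},
        (∏ p, w ((σ p).1) * f p ((σ p).1)) *
          Matrix.det (Matrix.of fun p q : ι => f q ((σ p).1)) := by
    refine (Finset.sum_bij (fun (σ : ι ≃ {e // e ∈ S}) _ => (fun p => (σ p).1)) ?_ ?_ ?_ ?_).symm
    · intro σ _
      simp only [Finset.mem_filter, Finset.mem_univ, true_and]
      constructor
      · exact fun p p' h => σ.injective (Subtype.ext h)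
      · ext e
        simp only [Finset.mem_image, Finset.mem_univ, true_and]
        constructor
        · rintro ⟨p, rfl⟩; exact (σ p).2
        · intro he; exact ⟨σ.symm ⟨e, he⟩, by simp⟩
    · intro σ _ σ' _ h
      ext p
      exact congrFun h p
    · intro r hr
      simp only [Finset.mem_filter, Finset.mem_univ, true_and] at hr
      obtain ⟨hinj, himg⟩ := hr
      have hmem : ∀ p, r p ∈ S := fun p => himg ▸ Finset.mem_image_of_mem _ (Finset.mem_univ p)
      have hbij : Function.Bijective (fun p => (⟨r p, hmem p⟩ : {e // e ∈ S})) := by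
        rw [Fintype.bijective_iff_injective_and_card]
        exact ⟨fun p p' h => hinj (congrArg Subtype.val h), hcardS.symm⟩
      exact ⟨Equiv.ofBijective _ hbij, Finset.mem_univ _, rfl⟩
    · intro σ _; rfl
  rw [hfiber]
  -- Step 4: evaluate the sum over equivalences
  have e₀ : ι ≃ {e // e ∈ S} := (Fintype.equivOfCardEq hcardS.symm)
  rw [← hF S hScard e₀, ← sum_perm_det (fun p (s : {e // e ∈ S}) => f p s.1) e₀]
  rw [Finset.mul_sum]
  refine Finset.sum_congr rfl fun σ _ => ?_
  have hw : (∏ p, w ((σ p).1)) = ∏ e ∈ S, w e := by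
    rw [← Finset.prod_coe_sort S w]
    exact Equiv.prod_comp σ (fun s : {e // e ∈ S} => w s.1)
  rw [Finset.prod_mul_distrib, hw]
  ring

end CB

end TwoSF
namespace TwoSF

variable {V : Type*} [Fintype V] [DecidableEq V]

set_option linter.unusedSectionVars false
set_option linter.unusedVariables false

lemma filter_mem_card_two {W : Finset V} :
    ∀ (e : Sym2 V), ¬ e.IsDiag → (∀ v ∈ e, v ∈ W) → (W.filter (· ∈ e)).card = 2 := by
  intro e
  induction e using Sym2.ind with
  | _ a a' =>
    intro hd hsub
    have hne : a ≠ a' := fun h => hd (Sym2.mk_isDiag_iff.2 h)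
    have hfil : W.filter (· ∈ s(a,a')) = {a, a'} := by
      ext u
      simp only [Finset.mem_filter, Sym2.mem_iff, Finset.mem_insert, Finset.mem_singleton]
      constructor
      · rintro ⟨-, h⟩; exact h
      · rintro (rfl | rfl)
        · exact ⟨hsub u (Sym2.mem_iff.2 (Or.inl rfl)), Or.inl rfl⟩
        · exact ⟨hsub u (Sym2.mem_iff.2 (Or.inr rfl)), Or.inr rfl⟩
    rw [hfil, Finset.card_pair hne]

lemma det_tree : ∀ (m : ℕ) (b : V) (W : Finset V) (S : Finset (Sym2 V)),
    b ∈ W → S.card = m → S.card + 1 = W.card →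
    (∀ e ∈ S, ¬ e.IsDiag) → (∀ e ∈ S, ∀ v ∈ e, v ∈ W) →
    (∀ v ∈ W, Linked S b v) →
    ∀ (ρ : Fin m ≃ {w // w ∈ W.erase b}) (γ : Fin m ≃ {e // e ∈ S}),
    (Matrix.det (Matrix.of fun p q : Fin m => sgn ((ρ p).1 : V) ((γ q).1)))^2 = 1 := by
  intro m
  induction m with
  | zero =>
    intro b W S hbW hSm hcard hnd hsub hconn ρ γ
    simp [Matrix.det_fin_zero]
  | succ m IH =>
    intro b W S hbW hSm hcard hnd hsub hconn ρ γ
    have hW : W.card = m + 2 := by omega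
    -- find a leaf ℓ ≠ b
    have h1lt : 1 < W.card := by omega
    obtain ⟨v₀, hv₀W, hv₀b⟩ := Finset.exists_mem_ne h1lt b
    have hdeg1 : ∀ v ∈ W, 1 ≤ (S.filter (fun e => v ∈ e)).card := by
      intro v hv
      rcases eq_or_ne v b with rfl | hvb
      · rcases (hconn v₀ hv₀W).cases_head with heq | ⟨c, hc, -⟩
        · exact absurd heq.symm hv₀b
        · exact Finset.card_pos.2 ⟨s(v, c), Finset.mem_filter.2
            ⟨hc, Sym2.mem_iff.2 (Or.inl rfl)⟩⟩
      · rcases (linked_symm (hconn v hv)).cases_head with heq | ⟨c, hc, -⟩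
        · exact absurd heq hvb
        · exact Finset.card_pos.2 ⟨s(v, c), Finset.mem_filter.2
            ⟨hc, Sym2.mem_iff.2 (Or.inl rfl)⟩⟩
    have handshake : ∑ v ∈ W, (S.filter (fun e => v ∈ e)).card = 2 * S.card := by
      calc ∑ v ∈ W, (S.filter (fun e => v ∈ e)).card
          = ∑ v ∈ W, ∑ e ∈ S, if v ∈ e then 1 else 0 := by
            refine Finset.sum_congr rfl fun v _ => ?_
            rw [Finset.card_filter]
        _ = ∑ e ∈ S, ∑ v ∈ W, if v ∈ e then 1 else 0 := Finset.sum_comm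
        _ = ∑ e ∈ S, (W.filter (· ∈ e)).card := by
            refine Finset.sum_congr rfl fun e _ => ?_
            rw [Finset.card_filter]
        _ = ∑ e ∈ S, 2 := by
            refine Finset.sum_congr rfl fun e he => ?_
            exact filter_mem_card_two e (hnd e he) (hsub e he)
        _ = 2 * S.card := by rw [Finset.sum_const, smul_eq_mul, mul_comm]
    have hleaf : ∃ ℓ ∈ W, ℓ ≠ b ∧ (S.filter (fun e => ℓ ∈ e)).card = 1 := by
      by_contra hno
      push_neg at hno
      have hge2 : ∀ ℓ ∈ W.erase b, 2 ≤ (S.filter (fun e => ℓ ∈ e)).card := by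
        intro ℓ hℓ
        obtain ⟨hℓb, hℓW⟩ := Finset.mem_erase.1 hℓ
        have h1 := hdeg1 ℓ hℓW
        have h2 := hno ℓ hℓW hℓb
        omega
      have hbound : (W.erase b).card * 2 ≤ ∑ v ∈ W.erase b, (S.filter (fun e => v ∈ e)).card := by
        have := Finset.card_nsmul_le_sum (W.erase b)
          (fun v => (S.filter (fun e => v ∈ e)).card) 2 hge2
        simpa [smul_eq_mul] using this
      have hsplit : ∑ v ∈ W.erase b, (S.filter (fun e => v ∈ e)).card
          + (S.filter (fun e => b ∈ e)).card = ∑ v ∈ W, (S.filter (fun e => v ∈ e)).card :=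
        Finset.sum_erase_add W _ hbW
      have hb1 := hdeg1 b hbW
      have hcerase : (W.erase b).card = m + 1 := by
        rw [Finset.card_erase_of_mem hbW]; omega
      rw [hcerase] at hbound
      omega
    obtain ⟨ℓ, hℓW, hℓb, hdegℓ⟩ := hleaf
    obtain ⟨e₀, he₀⟩ := Finset.card_eq_one.1 hdegℓ
    have he₀mem : e₀ ∈ S.filter (fun e => ℓ ∈ e) := he₀ ▸ Finset.mem_singleton_self e₀
    have he₀S : e₀ ∈ S := (Finset.mem_filter.1 he₀mem).1
    have hℓe₀ : ℓ ∈ e₀ := (Finset.mem_filter.1 he₀mem).2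
    have huniq : ∀ e ∈ S, ℓ ∈ e → e = e₀ := by
      intro e he hle
      have : e ∈ S.filter (fun e => ℓ ∈ e) := Finset.mem_filter.2 ⟨he, hle⟩
      rw [he₀] at this
      exact Finset.mem_singleton.1 this
    set mℓ := Sym2.Mem.other' hℓe₀ with hmℓdef
    have hspec : s(ℓ, mℓ) = e₀ := Sym2.other_spec' hℓe₀
    have hmℓmem : mℓ ∈ e₀ := Sym2.other_mem' hℓe₀
    have hmℓℓ : mℓ ≠ ℓ := by
      intro h
      exact hnd e₀ he₀S (by rw [← hspec, h]; exact Sym2.mk_isDiag_iff.2 rfl)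
    have hmW : mℓ ∈ W := hsub e₀ he₀S mℓ hmℓmem
    have hbℓ : b ≠ ℓ := Ne.symm hℓb
    set W' := W.erase ℓ with hW'def
    set S' := S.erase e₀ with hS'def
    have linked_avoid : ∀ v, Linked S b v → Linked S' b (if v = ℓ then mℓ else v) := by
      intro v h
      induction h with
      | refl =>
        rw [if_neg hbℓ]
        exact linked_refl _ b
      | @tail v' w hac hst ih =>
        by_cases hse : s(v', w) = e₀
        · rw [← hspec] at hse
          rcases Sym2.eq_iff.1 hse with ⟨h1, h2⟩ | ⟨h1, h2⟩
          · subst h1; subst h2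
            rw [if_pos rfl] at ih
            rw [if_neg hmℓℓ]
            exact ih
          · subst h1; subst h2
            rw [if_neg hmℓℓ] at ih
            rw [if_pos rfl]
            exact ih
        · have hv'ℓ : v' ≠ ℓ := fun h => hse (huniq _ hst
            (by rw [h]; exact Sym2.mem_iff.2 (Or.inl rfl)))
          have hwℓ : w ≠ ℓ := fun h => hse (huniq _ hst
            (by rw [h]; exact Sym2.mem_iff.2 (Or.inr rfl)))
          rw [if_neg hv'ℓ] at ih
          rw [if_neg hwℓ]
          exact ih.tail (Finset.mem_erase.2 ⟨hse, hst⟩)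
    have hbW' : b ∈ W' := Finset.mem_erase.2 ⟨hbℓ, hbW⟩
    have hS'c : S'.card = m := by rw [hS'def, Finset.card_erase_of_mem he₀S]; omega
    have hW'c : W'.card = m + 1 := by rw [hW'def, Finset.card_erase_of_mem hℓW]; omega
    have hnd' : ∀ e ∈ S', ¬ e.IsDiag := fun e he => hnd e (Finset.mem_of_mem_erase he)
    have hsub' : ∀ e ∈ S', ∀ v ∈ e, v ∈ W' := by
      intro e he v hv
      refine Finset.mem_erase.2 ⟨?_, hsub e (Finset.mem_of_mem_erase he) v hv⟩
      intro hvℓ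
      exact (Finset.mem_erase.1 he).1 (huniq e (Finset.mem_of_mem_erase he) (hvℓ ▸ hv))
    have hconn' : ∀ v ∈ W', Linked S' b v := by
      intro v hv
      obtain ⟨hvℓ, hvW⟩ := Finset.mem_erase.1 hv
      have := linked_avoid v (hconn v hvW)
      rwa [if_neg hvℓ] at this
    -- determinant manipulation
    have hℓmem : ℓ ∈ W.erase b := Finset.mem_erase.2 ⟨hℓb, hℓW⟩
    set jr := ρ.symm ⟨ℓ, hℓmem⟩ with hjr
    set jc := γ.symm ⟨e₀, he₀S⟩ with hjc
    set ρ₀ := (Equiv.swap (0 : Fin (m+1)) jr).trans ρ with hρ₀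
    set γ₀ := (Equiv.swap (0 : Fin (m+1)) jc).trans γ with hγ₀
    have hρ₀0 : ρ₀ 0 = ⟨ℓ, hℓmem⟩ := by
      rw [hρ₀]
      simp [Equiv.swap_apply_left, hjr]
    have hγ₀0 : γ₀ 0 = ⟨e₀, he₀S⟩ := by
      rw [hγ₀]
      simp [Equiv.swap_apply_left, hjc]
    set A := Matrix.of fun p q : Fin (m+1) => sgn ((ρ p).1 : V) ((γ q).1) with hA
    set A₀ := Matrix.of fun p q : Fin (m+1) => sgn ((ρ₀ p).1 : V) ((γ₀ q).1) with hA₀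
    have hsq : (Matrix.det A)^2 = (Matrix.det A₀)^2 := by
      have hsub0 : A₀ = (A.submatrix (Equiv.swap (0 : Fin (m+1)) jr) id).submatrix id
          (Equiv.swap (0 : Fin (m+1)) jc) := rfl
      rw [hsub0, Matrix.det_permute', Matrix.det_permute]
      rcases Int.units_eq_one_or (Equiv.Perm.sign (Equiv.swap (0 : Fin (m+1)) jr)) with h1 | h1 <;>
        rcases Int.units_eq_one_or (Equiv.Perm.sign (Equiv.swap (0 : Fin (m+1)) jc)) with h2 | h2 <;>
          rw [h1, h2] <;> push_cast <;> ring
    -- expand along the leaf row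
    have hexp := Matrix.det_succ_row_zero A₀
    have hsingle : ∑ j : Fin (m+1), (-1 : ℝ)^(j : ℕ) * A₀ 0 j *
        (A₀.submatrix Fin.succ j.succAbove).det =
        (-1 : ℝ)^((0 : Fin (m+1)) : ℕ) * A₀ 0 0 *
          (A₀.submatrix Fin.succ (Fin.succAbove 0)).det := by
      refine Finset.sum_eq_single 0 ?_ ?_
      · intro j _ hj
        have hzero : A₀ 0 j = 0 := by
          rw [hA₀]
          show sgn ((ρ₀ 0).1 : V) ((γ₀ j).1) = 0
          rw [hρ₀0]
          apply sgn_eq_zero_of_not_mem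
          intro hmem
          have : (γ₀ j).1 = e₀ := huniq _ (γ₀ j).2 hmem
          have : γ₀ j = γ₀ 0 := by rw [hγ₀0]; exact Subtype.ext this
          exact hj (γ₀.injective this)
        rw [hzero]; ring
      · intro h; exact absurd (Finset.mem_univ _) h
    -- the minor is the incidence matrix of the smaller tree
    have hcard' : Fintype.card {w // w ∈ W'.erase b} = m := by
      rw [Fintype.card_coe, Finset.card_erase_of_mem hbW', hW'c]
      omega
    have hcardS' : Fintype.card {e // e ∈ S'} = m := by
      rw [Fintype.card_coe, hS'c]
    have hρmem : ∀ p : Fin m, ((ρ₀ p.succ).1 : V) ∈ W'.erase b := by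
      intro p
      obtain ⟨hne, hmem⟩ := Finset.mem_erase.1 (ρ₀ p.succ).2
      refine Finset.mem_erase.2 ⟨hne, Finset.mem_erase.2 ⟨?_, hmem⟩⟩
      intro hℓeq
      have : ρ₀ p.succ = ρ₀ 0 := by rw [hρ₀0]; exact Subtype.ext hℓeq
      exact Fin.succ_ne_zero p (ρ₀.injective this)
    have hγmem : ∀ q : Fin m, ((γ₀ q.succ).1 : Sym2 V) ∈ S' := by
      intro q
      refine Finset.mem_erase.2 ⟨?_, (γ₀ q.succ).2⟩
      intro he₀eq
      have : γ₀ q.succ = γ₀ 0 := by rw [hγ₀0]; exact Subtype.ext he₀eq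
      exact Fin.succ_ne_zero q (γ₀.injective this)
    have hρbij : Function.Bijective
        (fun p : Fin m => (⟨(ρ₀ p.succ).1, hρmem p⟩ : {w // w ∈ W'.erase b})) := by
      rw [Fintype.bijective_iff_injective_and_card]
      constructor
      · intro p p' h
        simp only [Subtype.mk.injEq] at h
        exact Fin.succ_injective _ (ρ₀.injective (Subtype.ext h))
      · rw [hcard', Fintype.card_fin]
    have hγbij : Function.Bijective
        (fun q : Fin m => (⟨(γ₀ q.succ).1, hγmem q⟩ : {e // e ∈ S'})) := by
      rw [Fintype.bijective_iff_injective_and_card]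
      constructor
      · intro q q' h
        simp only [Subtype.mk.injEq] at h
        exact Fin.succ_injective _ (γ₀.injective (Subtype.ext h))
      · rw [hcardS', Fintype.card_fin]
    set ρ' := Equiv.ofBijective _ hρbij with hρ'
    set γ' := Equiv.ofBijective _ hγbij with hγ'
    have hIH := IH b W' S' hbW' hS'c (by omega) hnd' hsub' hconn' ρ' γ'
    have hminor : A₀.submatrix Fin.succ (Fin.succAbove 0) =
        Matrix.of fun p q : Fin m => sgn ((ρ' p).1 : V) ((γ' q).1) := by
      ext p q
      simp only [Matrix.submatrix_apply, Fin.succAbove_zero, hA₀, Matrix.of_apply]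
      rfl
    have hsgnℓ : sgn ℓ e₀ * sgn ℓ e₀ = 1 := sgn_mul_self hℓe₀ (hnd e₀ he₀S)
    have hA00 : A₀ 0 0 = sgn ℓ e₀ := by
      rw [hA₀]
      show sgn ((ρ₀ 0).1 : V) ((γ₀ 0).1) = sgn ℓ e₀
      rw [hρ₀0, hγ₀0]
    rw [hsq, hexp, hsingle, hminor, hA00]
    have : ((-1 : ℝ)^((0 : Fin (m+1)) : ℕ)) = 1 := by norm_num
    rw [this, one_mul, mul_pow, hIH, mul_one, sq, hsgnℓ]

end TwoSF
namespace TwoSF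

variable {V : Type*} [Fintype V] [DecidableEq V]

set_option linter.unusedSectionVars false
set_option linter.unusedVariables false

lemma sym2_exists_rep (e : Sym2 V) : ∃ a a', e = s(a, a') := by
  induction e using Sym2.ind with
  | _ a a' => exact ⟨a, a', rfl⟩

lemma exists_of_isDiag : ∀ {e : Sym2 V}, e.IsDiag → ∃ a, e = s(a, a) := by
  intro e
  induction e using Sym2.ind with
  | _ a a' =>
    intro hd
    exact ⟨a, by rw [Sym2.mk_isDiag_iff.1 hd]⟩

lemma card_ne_b (b : V) : Fintype.card {w : V // w ≠ b} = Fintype.card V - 1 := by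
  have h1 : Fintype.card {w : V // w = b} = 1 := Fintype.card_subtype_eq b
  have h2 := Fintype.card_subtype_compl (fun w : V => w = b)
  rw [h1] at h2
  exact h2

theorem det_dlap (c : Sym2 V → ℝ) (hloop : ∀ v : V, c s(v,v) = 0) (b : V) :
    (dlap c b).det = kappa1 c := by
  classical
  have hV1 : 1 ≤ Fintype.card V := Fintype.card_pos_iff.2 ⟨b⟩
  have hcardι := card_ne_b b
  have hdl : dlap c b = Matrix.of fun p q : {w : V // w ≠ b} =>
      ∑ e : Sym2 V, c e * (sgn (p.1 : V) e * sgn (q.1 : V) e) := by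
    ext p q
    show lap c p.1 q.1 = _
    rw [lap_eq_sum]
    rfl
  rw [hdl]
  rw [det_sum_mul c (fun (p : {w : V // w ≠ b}) e => sgn (p.1 : V) e)
    (fun S => if IsSF 1 S then wt c S else 0) ?_]
  · -- identify the sum with kappa1
    rw [Finset.sum_ite, Finset.sum_const, smul_zero, add_zero]
    rw [kappa1]
    congr 1
    ext B
    simp only [Finset.mem_filter, Finset.mem_powersetCard, Finset.mem_univ, true_and]
    constructor
    · rintro ⟨-, h⟩; exact h
    · intro h
      refine ⟨⟨Finset.subset_univ _, ?_⟩, h⟩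
      have := h.2
      omega
  · -- per-subset evaluation
    intro S hScard e₀
    change _ = if IsSF 1 S then wt c S else 0
    by_cases hdiag : ∃ e ∈ S, e.IsDiag
    · obtain ⟨e, heS, hd⟩ := hdiag
      obtain ⟨a, rfl⟩ := exists_of_isDiag hd
      have hc0 : c s(a,a) = 0 := hloop a
      have hwt0 : (∏ e ∈ S, c e) = 0 := Finset.prod_eq_zero heS hc0
      rw [hwt0, zero_mul]
      have hwt0' : wt c S = 0 := by rw [wt]; exact hwt0
      rw [hwt0']
      simp
    · push_neg at hdiag
      by_cases hnc : ncomp S = 1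
      · -- spanning tree: determinant squared is 1
        have hSF : IsSF 1 S := ⟨hnc, by omega⟩
        rw [if_pos hSF]
        have hdet1 : (Matrix.det (Matrix.of fun p q : {w : V // w ≠ b} =>
            sgn (p.1 : V) ((e₀ q).1)))^2 = 1 := by
          set k := Fintype.card {w : V // w ≠ b} with hk
          set u : Fin k ≃ {w : V // w ≠ b} := (Fintype.equivFin _).symm with hu
          set esb : {w : V // w ≠ b} ≃ {w // w ∈ Finset.univ.erase b} :=
            Equiv.subtypeEquivRight (fun w => by simp) with hesb
          have hdetsub := Matrix.det_submatrix_equiv_self u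
            (Matrix.of fun p q : {w : V // w ≠ b} => sgn (p.1 : V) ((e₀ q).1))
          rw [← hdetsub]
          have := det_tree k b Finset.univ S (Finset.mem_univ b)
            (by rw [hScard]) (by rw [Finset.card_univ]; omega) hdiag
            (fun e _ v _ => Finset.mem_univ v)
            (fun v _ => linked_of_ncomp_eq_one hnc b v)
            ((u.trans esb)) (u.trans e₀)
          rw [← this]
          congr 1
        rw [hdet1, mul_one, wt]
      · -- disconnected: determinant vanishes
        rw [if_neg (fun h => hnc h.1)]
        have hnl : ∃ v, ¬ Linked S b v := by
          by_contra hall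
          push_neg at hall
          exact hnc (ncomp_eq_one_of hall)
        obtain ⟨v, hnl⟩ := hnl
        have hvb : v ≠ b := fun h => hnl (h ▸ linked_refl S b)
        set x : {w : V // w ≠ b} → ℝ := fun p => if Linked S v p.1 then 1 else 0 with hx
        have hxne : x ≠ 0 := by
          rw [Function.ne_iff]
          exact ⟨⟨v, hvb⟩, by simp [hx, linked_refl S v]⟩
        have hcol : ∀ e ∈ S, ∑ p : {w : V // w ≠ b}, x p * sgn (p.1 : V) e = 0 := by
          intro e heS
          obtain ⟨a, a', hea⟩ := sym2_exists_rep e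
          subst hea
          have hne : a ≠ a' := fun h => (hdiag _ heS) (Sym2.mk_isDiag_iff.2 h)
          have hnvb : ¬ Linked S v b := fun h => hnl (linked_symm h)
          set Y : V → ℝ := fun u => (if Linked S v u then (1:ℝ) else 0) * sgn u s(a,a')
            with hY
          have hconv : ∑ u ∈ Finset.univ.filter (fun w : V => w ≠ b), Y u
              = ∑ p : {w : V // w ≠ b}, Y p.1 :=
            Finset.sum_subtype _ (fun w => by simp) Y
          have hstart : ∑ p : {w : V // w ≠ b}, x p * sgn (p.1 : V) s(a,a')
              = ∑ u ∈ Finset.univ.filter (fun w : V => w ≠ b), Y u := by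
            rw [hconv]
          rw [hstart]
          have hfull : ∑ u ∈ Finset.univ.filter (fun w : V => w ≠ b), Y u
              = ∑ u : V, Y u := by
            refine Finset.sum_filter_of_ne ?_
            intro u _ hYu
            intro hub
            apply hYu
            rw [hY]
            simp only [hub]
            rw [if_neg hnvb, zero_mul]
          rw [hfull]
          have hsupp : ∑ u : V, Y u = ∑ u ∈ ({a, a'} : Finset V), Y u := by
            refine (Finset.sum_subset (Finset.subset_univ _) ?_).symm
            intro u _ hu
            simp only [Finset.mem_insert, Finset.mem_singleton] at hu
            push_neg at hu
            rw [hY]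
            simp only []
            rw [sgn_eq_zero_of_not_mem (fun hmem => by
              rcases Sym2.mem_iff.1 hmem with h | h
              · exact hu.1 h
              · exact hu.2 h), mul_zero]
          rw [hsupp, Finset.sum_pair hne]
          have hiff : Linked S v a ↔ Linked S v a' :=
            ⟨fun h => h.trans (linked_of_mem heS),
             fun h => h.trans (linked_symm (linked_of_mem heS))⟩
          rw [hY]
          simp only []
          by_cases hLa : Linked S v a
          · rw [if_pos hLa, if_pos (hiff.1 hLa), one_mul, one_mul]
            exact sgn_add_sgn hne
          · rw [if_neg hLa, if_neg (fun h => hLa (hiff.2 h)), zero_mul, zero_mul, add_zero]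
        have hdet0 : Matrix.det (Matrix.of fun p q : {w : V // w ≠ b} =>
            sgn (p.1 : V) ((e₀ q).1)) = 0 := by
          rw [← Matrix.exists_vecMul_eq_zero_iff]
          refine ⟨x, hxne, ?_⟩
          funext q
          show ∑ p, x p * sgn (p.1 : V) ((e₀ q).1) = 0
          exact hcol _ (e₀ q).2
        rw [hdet0]
        ring

end TwoSF
namespace TwoSF

variable {V : Type*} [Fintype V] [DecidableEq V]

set_option linter.unusedSectionVars false
set_option linter.unusedVariables false

/-- The discrete gradient indicator of the pair `(x, y)`. -/
def chi (x y u : V) : ℝ := (if u = x then 1 else 0) - (if u = y then 1 else 0)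

lemma sum_new_edge_diag (x y u : V) (hxy : x ≠ y) :
    ∑ w' ∈ Finset.univ.filter (· ≠ u), (if s(u,w') = s(x,y) then (1:ℝ) else 0)
      = chi x y u * chi x y u := by
  by_cases hux : u = x
  · have hsummand : ∀ w' : V, (if s(u,w') = s(x,y) then (1:ℝ) else 0)
        = if w' = y then 1 else 0 := by
      intro w'
      have h1 : s(u,w') = s(x,y) ↔ w' = y := by
        rw [hux]; exact Sym2.congr_right
      exact if_congr h1 rfl rfl
    rw [Finset.sum_congr rfl fun w' _ => hsummand w']
    rw [Finset.sum_ite_eq' (Finset.univ.filter (· ≠ u)) y (fun _ => (1:ℝ))]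
    have hyu : y ≠ u := fun h => hxy (hux.symm.trans h.symm)
    rw [if_pos (Finset.mem_filter.2 ⟨Finset.mem_univ y, hyu⟩)]
    have huy : u ≠ y := fun h => hxy (hux.symm.trans h)
    rw [chi, if_pos hux, if_neg huy]
    norm_num
  · by_cases huy : u = y
    · have hsummand : ∀ w' : V, (if s(u,w') = s(x,y) then (1:ℝ) else 0)
          = if w' = x then 1 else 0 := by
        intro w'
        have h1 : s(u,w') = s(x,y) ↔ w' = x := by
          rw [huy, Sym2.eq_swap (a := x) (b := y)]
          exact Sym2.congr_right
        exact if_congr h1 rfl rfl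
      rw [Finset.sum_congr rfl fun w' _ => hsummand w']
      rw [Finset.sum_ite_eq' (Finset.univ.filter (· ≠ u)) x (fun _ => (1:ℝ))]
      have hxu : x ≠ u := fun h => hux h.symm
      rw [if_pos (Finset.mem_filter.2 ⟨Finset.mem_univ x, hxu⟩)]
      rw [chi, if_neg hux, if_pos huy]
      norm_num
    · have hsummand : ∀ w' : V, (if s(u,w') = s(x,y) then (1:ℝ) else 0) = 0 := by
        intro w'
        rw [if_neg]
        intro hh
        have : u ∈ s(x,y) := hh ▸ Sym2.mem_iff.2 (Or.inl rfl)
        rcases Sym2.mem_iff.1 this with h | h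
        · exact hux h
        · exact huy h
      rw [Finset.sum_congr rfl (fun w' _ => hsummand w'), Finset.sum_const, smul_zero]
      rw [chi, if_neg hux, if_neg huy]
      ring

lemma lap_add (c : Sym2 V → ℝ) {x y : V} (hxy : x ≠ y) (u w : V) :
    lap (fun e => c e + (if e = s(x,y) then 1 else 0)) u w
      = lap c u w + chi x y u * chi x y w := by
  rcases eq_or_ne u w with rfl | huw
  · rw [lap, lap, if_pos rfl, if_pos rfl, Finset.sum_add_distrib]
    congr 1
    exact sum_new_edge_diag x y u hxy
  · rw [lap, lap, if_neg huw, if_neg huw]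
    have hkey : (if s(u,w) = s(x,y) then (1:ℝ) else 0) = - (chi x y u * chi x y w) := by
      by_cases hse : s(u,w) = s(x,y)
      · rw [if_pos hse]
        rcases Sym2.eq_iff.1 hse with ⟨rfl, rfl⟩ | ⟨rfl, rfl⟩
        · rw [chi, chi, if_pos rfl, if_neg hxy, if_pos rfl, if_neg (Ne.symm hxy)]
          ring
        · rw [chi, chi, if_pos rfl, if_neg hxy, if_pos rfl, if_neg (Ne.symm hxy)]
          ring
      · rw [if_neg hse]
        have hz : chi x y u * chi x y w = 0 := by
          by_cases hux : u = x
          · have hwy : w ≠ y := fun h => hse (by rw [hux, h])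
            have hwx : w ≠ x := by rw [← hux]; exact Ne.symm huw
            rw [chi, chi, if_neg hwx, if_neg hwy]
            ring
          · by_cases huy : u = y
            · have hwx : w ≠ x := fun h => hse (by rw [huy, h, Sym2.eq_swap])
              have hwy : w ≠ y := by rw [← huy]; exact Ne.symm huw
              rw [chi, chi, if_neg hwx, if_neg hwy]
              ring
            · rw [chi, chi, if_neg hux, if_neg huy]
              ring
        rw [hz]
        ring
    rw [hkey]
    ring

lemma kappa1_add (c : Sym2 V → ℝ) (e₀ : Sym2 V) :
    kappa1 (fun e => c e + (if e = e₀ then 1 else 0)) =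
      kappa1 c + ∑ A ∈ Finset.univ.filter (fun A => IsSF 1 A ∧ e₀ ∈ A),
        ∏ e ∈ A.erase e₀, c e := by
  rw [kappa1, kappa1]
  have hsplit : ∀ A : Finset (Sym2 V), wt (fun e => c e + (if e = e₀ then 1 else 0)) A
      = wt c A + (if e₀ ∈ A then ∏ e ∈ A.erase e₀, c e else 0) := by
    intro A
    by_cases hmem : e₀ ∈ A
    · rw [if_pos hmem, wt, wt]
      rw [← Finset.mul_prod_erase A _ hmem, ← Finset.mul_prod_erase A c hmem]
      have hrest : ∏ e ∈ A.erase e₀, (c e + if e = e₀ then (1:ℝ) else 0)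
          = ∏ e ∈ A.erase e₀, c e :=
        Finset.prod_congr rfl (fun e he => by rw [if_neg (Finset.ne_of_mem_erase he), add_zero])
      rw [hrest, if_pos rfl]
      ring
    · rw [if_neg hmem, add_zero, wt, wt]
      exact Finset.prod_congr rfl (fun e he => by
        have hne : e ≠ e₀ := fun h => hmem (h ▸ he)
        rw [if_neg hne, add_zero])
  rw [Finset.sum_congr rfl (fun A _ => hsplit A), Finset.sum_add_distrib]
  congr 1
  rw [← Finset.sum_filter, Finset.filter_filter]

lemma num_eq (c : Sym2 V → ℝ) (b x y : V) :
    ∑ B ∈ Finset.univ.filter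
        (fun B => IsSF 2 B ∧ Xor' (x ∈ floating b B) (y ∈ floating b B)), wt c B
      = ∑ A ∈ Finset.univ.filter (fun A => IsSF 1 A ∧ s(x,y) ∈ A),
          ∏ e ∈ A.erase s(x,y), c e := by
  refine Finset.sum_nbij' (fun B => insert s(x,y) B) (fun A => A.erase s(x,y)) ?_ ?_ ?_ ?_ ?_
  · intro B hB
    simp only [Finset.mem_filter, Finset.mem_univ, true_and] at hB ⊢
    obtain ⟨h2, hxor⟩ := hB
    obtain ⟨h1, -, -⟩ := isSF_one_insert h2 hxor
    exact ⟨h1, Finset.mem_insert_self _ _⟩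
  · intro A hA
    simp only [Finset.mem_filter, Finset.mem_univ, true_and] at hA ⊢
    obtain ⟨h1, hmem⟩ := hA
    exact isSF_two_erase h1 hmem
  · intro B hB
    simp only [Finset.mem_filter, Finset.mem_univ, true_and] at hB
    obtain ⟨h2, hxor⟩ := hB
    obtain ⟨-, hnm, -⟩ := isSF_one_insert h2 hxor
    exact Finset.erase_insert hnm
  · intro A hA
    simp only [Finset.mem_filter, Finset.mem_univ, true_and] at hA
    exact Finset.insert_erase hA.2
  · intro B hB
    simp only [Finset.mem_filter, Finset.mem_univ, true_and] at hB
    obtain ⟨h2, hxor⟩ := hB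
    obtain ⟨-, hnm, -⟩ := isSF_one_insert h2 hxor
    rw [wt, Finset.erase_insert hnm]

lemma sum_ind {b : V} (z : V) (f : {w : V // w ≠ b} → ℝ) :
    ∑ p : {w : V // w ≠ b}, (if (p.1 : V) = z then 1 else 0) * f p
      = if hz : z = b then 0 else f ⟨z, hz⟩ := by
  split_ifs with hz
  · refine Finset.sum_eq_zero fun p _ => ?_
    rw [if_neg (fun h => p.2 (h.trans hz)), zero_mul]
  · rw [Finset.sum_eq_single (⟨z, hz⟩ : {w : V // w ≠ b})]
    · rw [if_pos rfl, one_mul]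
    · intro p _ hp
      rw [if_neg (fun h => hp (Subtype.ext h)), zero_mul]
    · intro h; exact absurd (Finset.mem_univ _) h

end TwoSF

open TwoSF

/-- For a finite connected undirected graph with positive
conductances and marked vertex `b`, and an edge `e = {x, y}` (i.e.
`c s(x,y) ≠ 0`), the probability that `e` has exactly one endpoint in the
floating component `Σ` of a weight-proportional random two-component spanning
forest equals `κ · T(e,e) / (c(e) · κ₂)`, where
`T(e,e) = c(e) · (G_{x,x} - 2 G_{x,y} + G_{y,y})` is the transfer current. -/
theorem statement_6 {V : Type*} [Fintype V] [DecidableEq V] (c : Sym2 V → ℝ)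
    (hc : ∀ e, 0 ≤ c e) (hloop : ∀ v : V, c s(v, v) = 0)
    (hconn : ncomp (Finset.univ.filter fun e : Sym2 V => c e ≠ 0) = 1)
    (b x y : V) (he : c s(x, y) ≠ 0) :
    pr2 c (fun B => Xor' (x ∈ floating b B) (y ∈ floating b B)) =
      kappa1 c * (c s(x, y) * (green c b x x - 2 * green c b x y + green c b y y)) /
        (c s(x, y) * kappa2 c) := by
  classical
  have hxy : x ≠ y := by
    intro h
    apply he
    rw [h]
    exact hloop y
  -- positivity of κ₁
  obtain ⟨T, hTsub, hTsf⟩ := exists_spanning_tree b hconn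
  have hk1pos : 0 < kappa1 c := by
    rw [kappa1]
    apply Finset.sum_pos'
    · intro A _
      exact Finset.prod_nonneg (fun e _ => hc e)
    · refine ⟨T, Finset.mem_filter.2 ⟨Finset.mem_univ T, hTsf⟩, ?_⟩
      have hpos : 0 < ∏ e ∈ T, c e := by
        apply Finset.prod_pos
        intro e heT
        have hmem := hTsub heT
        simp only [Finset.mem_filter, Finset.mem_univ, true_and] at hmem
        exact lt_of_le_of_ne (hc e) (Ne.symm hmem)
      exact hpos
  set D := dlap c b with hD
  have hdetD : D.det = kappa1 c := det_dlap c hloop b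
  have hdet_ne : IsUnit D.det := by
    rw [hdetD]
    exact isUnit_iff_ne_zero.2 (ne_of_gt hk1pos)
  set vι : {w : V // w ≠ b} → ℝ := fun p => chi x y p.1 with hvι
  have hloop' : ∀ v : V, (fun e => c e + (if e = s(x,y) then (1:ℝ) else 0)) s(v,v) = 0 := by
    intro v
    simp only []
    rw [hloop v, zero_add, if_neg]
    intro h
    rcases Sym2.eq_iff.1 h with ⟨h1, h2⟩ | ⟨h1, h2⟩
    · exact hxy (h1.symm.trans h2)
    · exact hxy (h2.symm.trans h1)
  have hdlap' : dlap (fun e => c e + (if e = s(x,y) then (1:ℝ) else 0)) b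
      = D + Matrix.replicateCol Unit vι * Matrix.replicateRow Unit vι := by
    ext p q
    have hcr : (Matrix.replicateCol Unit vι * Matrix.replicateRow Unit vι) p q = vι p * vι q := by
      simp [Matrix.mul_apply, Matrix.replicateCol_apply, Matrix.replicateRow_apply]
    show lap (fun e => c e + (if e = s(x,y) then (1:ℝ) else 0)) p.1 q.1
        = (D + Matrix.replicateCol Unit vι * Matrix.replicateRow Unit vι) p q
    rw [lap_add c hxy p.1 q.1, Matrix.add_apply, hcr]
    rfl
  have hMDL := Matrix.det_add_replicateCol_mul_replicateRow (ι := Unit) hdet_ne vι vι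
  set innerf : {w : V // w ≠ b} → ℝ :=
    fun q => ∑ p : {w : V // w ≠ b}, vι p * D⁻¹ p q with hinnerf0
  set Q : ℝ := ∑ q : {w : V // w ≠ b}, innerf q * vι q with hQdef
  have hdet1Q : (1 + Matrix.replicateRow Unit vι * D⁻¹ * Matrix.replicateCol Unit vι).det = 1 + Q := by
    rw [Matrix.det_unique, Matrix.add_apply, Matrix.one_apply_eq]
    congr 1
  set F : ℝ := ∑ A ∈ Finset.univ.filter (fun A => IsSF 1 A ∧ s(x,y) ∈ A),
      ∏ e ∈ A.erase s(x,y), c e with hFdef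
  have hka : kappa1 (fun e => c e + (if e = s(x,y) then (1:ℝ) else 0)) = kappa1 c + F :=
    kappa1_add c s(x,y)
  have hdet' : (dlap (fun e => c e + (if e = s(x,y) then (1:ℝ) else 0)) b).det
      = kappa1 c + F := by rw [det_dlap _ hloop' b, hka]
  have hFQ : F = kappa1 c * Q := by
    have h1 : kappa1 c + F = kappa1 c * (1 + Q) := by
      rw [← hdet', hdlap', hMDL, hdet1Q, hdetD]
    nlinarith [h1]
  have hnum := num_eq c b x y
  -- symmetry of the Green function
  have hsym : ∀ p q : {w : V // w ≠ b}, D⁻¹ p q = D⁻¹ q p := by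
    have hDt : D.transpose = D := by
      ext p q
      show lap c q.1 p.1 = lap c p.1 q.1
      exact lap_symm c q.1 p.1
    have h2 : D⁻¹.transpose = D⁻¹ := by
      rw [Matrix.transpose_nonsing_inv, hDt]
    intro p q
    conv_lhs => rw [← h2]
    rfl
  -- Q in terms of the Green function
  have hQgreen : Q = green c b x x - 2 * green c b x y + green c b y y := by
    have hinner : ∀ q : {w : V // w ≠ b}, innerf q
        = (if hx : x = b then 0 else D⁻¹ ⟨x, hx⟩ q)
          - (if hy : y = b then 0 else D⁻¹ ⟨y, hy⟩ q) := by
      intro q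
      show (∑ p : {w : V // w ≠ b}, vι p * D⁻¹ p q)
          = (if hx : x = b then 0 else D⁻¹ ⟨x, hx⟩ q)
            - (if hy : y = b then 0 else D⁻¹ ⟨y, hy⟩ q)
      have hsplit : ∀ p : {w : V // w ≠ b}, vι p * D⁻¹ p q
          = (if (p.1 : V) = x then 1 else 0) * D⁻¹ p q
            - (if (p.1 : V) = y then 1 else 0) * D⁻¹ p q := by
        intro p
        rw [hvι]
        simp only [chi]
        ring
      rw [Finset.sum_congr rfl (fun p _ => hsplit p), Finset.sum_sub_distrib,
        sum_ind x (fun p => D⁻¹ p q), sum_ind y (fun p => D⁻¹ p q)]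
    have hinnerfun : innerf = fun q => (if hx : x = b then 0 else D⁻¹ ⟨x, hx⟩ q)
        - (if hy : y = b then 0 else D⁻¹ ⟨y, hy⟩ q) := funext hinner
    have hQ1 : Q = (if hx : x = b then 0 else innerf ⟨x, hx⟩)
        - (if hy : y = b then 0 else innerf ⟨y, hy⟩) := by
      rw [hQdef]
      have hsplitq : ∀ q : {w : V // w ≠ b}, innerf q * vι q
          = (if (q.1 : V) = x then 1 else 0) * innerf q
            - (if (q.1 : V) = y then 1 else 0) * innerf q := by
        intro q
        rw [hvι]
        simp only [chi]
        ring
      rw [Finset.sum_congr rfl (fun q _ => hsplitq q), Finset.sum_sub_distrib,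
        sum_ind x innerf, sum_ind y innerf]
    rw [hQ1, hinnerfun]
    simp only []
    by_cases hxb : x = b
    · by_cases hyb : y = b
      · exact absurd (hxb.trans hyb.symm) hxy
      · simp only [green, dif_pos hxb, dif_neg hyb]
        ring
    · by_cases hyb : y = b
      · simp only [green, dif_pos hyb, dif_neg hxb]
        ring
      · simp only [green, dif_neg hxb, dif_neg hyb]
        rw [hsym ⟨y, hyb⟩ ⟨x, hxb⟩]
        ring
  -- assemble
  have hpr : pr2 c (fun B => Xor' (x ∈ floating b B) (y ∈ floating b B)) = F / kappa2 c := by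
    rw [pr2, hFdef]
    congr 1
  rw [hpr, hFQ, hQgreen]
  rw [show kappa1 c * (c s(x,y) * (green c b x x - 2 * green c b x y + green c b y y))
      = c s(x,y) * (kappa1 c * (green c b x x - 2 * green c b x y + green c b y y)) from by ring]
  rw [mul_div_mul_left _ _ he]
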